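/- arXiv:math/0408030 — 3 statements merged into one kernel-verified Lean document; each statement's English description precedes it below -/
import Mathlib

section
/- If the functional equation v_i h_k'(v_k) = − v_k h_i'(v_i) holds for all i ≠ k (1 ≤ i,k ≤ N, N ≥ 3) and all (v_1,...,v_N) on S^{N-1}, for differentiable functions h_1,...,h_N on (−1,1), then each h_j' is identically zero, i.e., each h_j is constant. -/
lemma exists_sphere_point' {N : ℕ} (j k l : Fin N) (hjk : j ≠ k) (hjl : j ≠ l)
    (hkl : k ≠ l) (x t s : ℝ) (hx : |x| < 1) (ht : |t| < 1) (hs : |s| < 1)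
    (hsum : x ^ 2 + t ^ 2 + s ^ 2 = 1) :
    ∃ v : EuclideanSpace ℝ (Fin N), ‖v‖ = 1 ∧ (∀ m, v m ∈ Set.Ioo (-1 : ℝ) 1) ∧
      v j = x ∧ v k = t ∧ v l = s := by
  refine ⟨(WithLp.toLp 2 (fun m => if m = j then x else if m = k then t else if m = l then s else 0) :
      EuclideanSpace ℝ (Fin N)), ?_, ?_, ?_, ?_, ?_⟩
  · rw [EuclideanSpace.norm_eq]
    simp only [PiLp.toLp_apply]
    have key : ∀ m : Fin N,
        ‖(if m = j then x else if m = k then t else if m = l then s else 0)‖ ^ 2 =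
        (if m = j then x ^ 2 else 0) + (if m = k then t ^ 2 else 0) +
          (if m = l then s ^ 2 else 0) := by
      intro m
      by_cases h1 : m = j <;> by_cases h2 : m = k <;> by_cases h3 : m = l <;>
        simp_all [Real.norm_eq_abs, sq_abs]
    rw [Finset.sum_congr rfl (fun m _ => key m)]
    rw [Finset.sum_add_distrib, Finset.sum_add_distrib]
    simp [Finset.sum_ite_eq', hsum]
  · intro m
    by_cases h1 : m = j <;> by_cases h2 : m = k <;> by_cases h3 : m = l <;>
      simp_all [Set.mem_Ioo, abs_lt] <;> constructor <;> linarith [abs_lt.mp hx]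
  · simp
  · simp [hjk.symm, hkl]
  · simp [hjl.symm, hkl.symm]

/-- if differentiable functions `h_1,…,h_N` on `(-1,1)`, `N ≥ 3`,
satisfy `v_i h_k'(v_k) = − v_k h_i'(v_i)` for all `i ≠ k` and all points of the
unit sphere (with coordinates in `(-1,1)`), then each `h_j'` vanishes identically,
i.e. each `h_j` is constant. -/
theorem functional_equation_on_sphere_forces_constants (N : ℕ) (hN : 3 ≤ N)
    (h h' : Fin N → ℝ → ℝ)
    (hderiv : ∀ j, ∀ x ∈ Set.Ioo (-1 : ℝ) 1, HasDerivAt (h j) (h' j x) x)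
    (heq : ∀ i k : Fin N, i ≠ k →
      ∀ v : EuclideanSpace ℝ (Fin N), ‖v‖ = 1 →
        (∀ j, v j ∈ Set.Ioo (-1 : ℝ) 1) →
        v i * h' k (v k) = - (v k * h' i (v i))) :
    ∀ j, ∀ x ∈ Set.Ioo (-1 : ℝ) 1, h' j x = 0 := by
  -- pick two other indices
  have pick : ∀ j : Fin N, ∃ k l : Fin N, j ≠ k ∧ j ≠ l ∧ k ≠ l := by
    intro j
    have h1 : 1 < (Finset.univ.erase j).card := by
      rw [Finset.card_erase_of_mem (Finset.mem_univ j), Finset.card_univ,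
        Fintype.card_fin]
      omega
    obtain ⟨k, hk, l, hl, hkl⟩ := Finset.one_lt_card.mp h1
    exact ⟨k, l, (Finset.ne_of_mem_erase hk).symm, (Finset.ne_of_mem_erase hl).symm, hkl⟩
  -- value at 0 is zero
  have zero_case : ∀ j, h' j 0 = 0 := by
    intro j
    obtain ⟨k, l, hjk, hjl, hkl⟩ := pick j
    set r : ℝ := Real.sqrt (1 / 2) with hr
    have hr2 : r ^ 2 = 1 / 2 := Real.sq_sqrt (by norm_num)
    have hrpos : 0 < r := Real.sqrt_pos.mpr (by norm_num)
    have hrlt : |r| < 1 := by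
      rw [abs_of_pos hrpos]; nlinarith
    obtain ⟨v, hv1, hv2, hvj, hvk, hvl⟩ := exists_sphere_point' j k l hjk hjl hkl
      0 r r (by norm_num) hrlt hrlt (by rw [hr2]; ring)
    have := heq k j (Ne.symm hjk) v hv1 hv2
    rw [hvj, hvk] at this
    simp at this
    rcases this with h0 | h0
    · exact absurd h0 (ne_of_gt hrpos)
    · exact h0
  -- small nonzero values
  have small : ∀ j (x : ℝ), x ≠ 0 → x ^ 2 ≤ 1 / 2 → h' j x = 0 := by
    intro j x hx0 hx2
    obtain ⟨k, l, hjk, hjl, hkl⟩ := pick j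
    have hxabs : |x| < 1 := by
      rw [abs_lt]; constructor <;> nlinarith
    set s : ℝ := Real.sqrt (1 - 2 * x ^ 2) with hs
    have hs2 : s ^ 2 = 1 - 2 * x ^ 2 := Real.sq_sqrt (by nlinarith)
    have hsnn : 0 ≤ s := Real.sqrt_nonneg _
    have hsabs : |s| < 1 := by
      rw [abs_of_nonneg hsnn]; nlinarith [sq_nonneg x, pow_pos (abs_pos.mpr hx0) 2, sq_abs x]
    have hsum : x ^ 2 + x ^ 2 + s ^ 2 = 1 := by rw [hs2]; ring
    obtain ⟨v1, hv11, hv12, hv1j, hv1k, hv1l⟩ :=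
      exists_sphere_point' j k l hjk hjl hkl x x s hxabs hxabs hsabs hsum
    obtain ⟨v2, hv21, hv22, hv2j, hv2l, hv2k⟩ :=
      exists_sphere_point' j l k hjl hjk hkl.symm x x s hxabs hxabs hsabs hsum
    obtain ⟨v3, hv31, hv32, hv3k, hv3l, hv3j⟩ :=
      exists_sphere_point' k l j hkl hjk.symm hjl.symm x x s hxabs hxabs hsabs hsum
    have e1 := heq j k hjk v1 hv11 hv12
    rw [hv1j, hv1k] at e1
    have e2 := heq j l hjl v2 hv21 hv22
    rw [hv2j, hv2l] at e2
    have e3 := heq k l hkl v3 hv31 hv32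
    rw [hv3k, hv3l] at e3
    have : x * h' j x = 0 := by linarith
    exact (mul_eq_zero.mp this).resolve_left hx0
  -- general case
  intro j x hx
  obtain ⟨hx1, hx2⟩ := hx
  by_cases hcase : x ^ 2 ≤ 1 / 2
  · by_cases hx0 : x = 0
    · rw [hx0]; exact zero_case j
    · exact small j x hx0 hcase
  · push_neg at hcase
    obtain ⟨k, l, hjk, hjl, hkl⟩ := pick j
    set t : ℝ := Real.sqrt (1 - x ^ 2) / 2 with ht
    have h1x2 : 0 < 1 - x ^ 2 := by nlinarith
    have htpos : 0 < t := by positivity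
    have ht2 : t ^ 2 = (1 - x ^ 2) / 4 := by
      rw [ht, div_pow, Real.sq_sqrt h1x2.le]; ring
    have ht2' : t ^ 2 ≤ 1 / 2 := by nlinarith
    have htabs : |t| < 1 := by rw [abs_of_pos htpos]; nlinarith
    set s : ℝ := Real.sqrt (1 - x ^ 2 - t ^ 2) with hs
    have hs2 : s ^ 2 = 1 - x ^ 2 - t ^ 2 := Real.sq_sqrt (by nlinarith)
    have hsabs : |s| < 1 := by
      rw [abs_of_nonneg (Real.sqrt_nonneg _)]; nlinarith
    have hxabs : |x| < 1 := abs_lt.mpr ⟨hx1, hx2⟩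
    obtain ⟨v, hv1, hv2, hvj, hvk, hvl⟩ :=
      exists_sphere_point' j k l hjk hjl hkl x t s hxabs htabs hsabs (by rw [hs2]; ring)
    have e := heq j k hjk v hv1 hv2
    rw [hvj, hvk] at e
    have hkt : h' k t = 0 := small k t (ne_of_gt htpos) ht2'
    rw [hkt] at e
    have : t * h' j x = 0 := by linarith
    exact (mul_eq_zero.mp this).resolve_left (ne_of_gt htpos)
end

section
/- Factorization lemma: let a_1,...,a_N span ℝ^M, S ⊊ {1,...,N} nonempty, r = dim span{a_j : j ∈ S}. Then there exist vectors b_j ∈ ℝ^r (j ∈ S ∪ S^c) and c_j ∈ ℝ^{M−r} (j ∈ S^c) such that for all nonnegative bounded compactly supported f_j: ∫_{ℝ^M} ∏_{j=1}^N f_j(a_j·x) d^M x = ∫_{ℝ^r} ∏_{j∈S} f_j(b_j·y) ( ∫_{ℝ^{M−r}} ∏_{j∈S^c} f_j(b_j·y + c_j·z) d^{M−r} z ) d^r y. -/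
open MeasureTheory ENNReal

/-- factorization lemma: the integral `∫ ∏_j f_j(a_j·x) dx` over
`ℝ^M` factors through the span of `{a_j : j ∈ S}` (of dimension `r`) and its
orthogonal complement. -/
theorem brascampLieb_factorization (M N : ℕ)
    (a : Fin N → Fin M → ℝ)
    (hspan : Submodule.span ℝ (Set.range a) = ⊤)
    (S : Finset (Fin N)) (hS1 : S.Nonempty) (hS2 : S ≠ Finset.univ)
    (r : ℕ) (hr : r = Module.finrank ℝ (Submodule.span ℝ (a '' ↑S))) :
    ∃ b : Fin N → Fin r → ℝ, ∃ c : Fin N → Fin (M - r) → ℝ,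
      ∀ f : Fin N → ℝ → ℝ, (∀ j, Measurable (f j)) → (∀ j y, 0 ≤ f j y) →
        (∀ j, ∃ C, ∀ y, f j y ≤ C) → (∀ j, HasCompactSupport (f j)) →
        (∫⁻ x : Fin M → ℝ, ∏ j, ENNReal.ofReal (f j (∑ m, a j m * x m))) =
          ∫⁻ y : Fin r → ℝ,
            (∏ j ∈ S, ENNReal.ofReal (f j (∑ m, b j m * y m))) *
              ∫⁻ z : Fin (M - r) → ℝ,
                ∏ j ∈ Sᶜ, ENNReal.ofReal
                  (f j ((∑ m, b j m * y m) + ∑ m, c j m * z m)) := by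
  classical
  let a' : Fin N → EuclideanSpace ℝ (Fin M) := fun j => (WithLp.equiv 2 (Fin M → ℝ)).symm (a j)
  let V : Submodule ℝ (EuclideanSpace ℝ (Fin M)) := Submodule.span ℝ (a' '' ↑S)
  have hVr : Module.finrank ℝ V = r := by
    have h1 : V.map ((WithLp.linearEquiv 2 ℝ (Fin M → ℝ)) : EuclideanSpace ℝ (Fin M) →ₗ[ℝ] (Fin M → ℝ))
        = Submodule.span ℝ (a '' ↑S) := by
      rw [Submodule.map_span]
      congr 1
      ext v
      simp [a', WithLp.linearEquiv]
    have h2 := LinearEquiv.finrank_map_eq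
      (WithLp.linearEquiv 2 ℝ (Fin M → ℝ)) V
    rw [h1] at h2
    rw [← h2, ← hr]
  have hrM : r ≤ M := by
    rw [← hVr]
    simpa using V.finrank_le
  have hWr : Module.finrank ℝ Vᗮ = M - r := by
    have h := V.finrank_add_finrank_orthogonal
    rw [hVr] at h
    simp only [finrank_euclideanSpace, Fintype.card_fin] at h
    omega
  let bV : OrthonormalBasis (Fin r) ℝ V :=
    (stdOrthonormalBasis ℝ V).reindex (finCongr (by rw [hVr]))
  let bW : OrthonormalBasis (Fin (M - r)) ℝ Vᗮ :=
    (stdOrthonormalBasis ℝ Vᗮ).reindex (finCongr (by rw [hWr]))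
  let e : Fin r ⊕ Fin (M - r) → EuclideanSpace ℝ (Fin M) := Sum.elim (fun i => (bV i : EuclideanSpace ℝ (Fin M))) (fun i => (bW i : EuclideanSpace ℝ (Fin M)))
  have horth : Orthonormal ℝ e := by
    rw [orthonormal_iff_ite]
    rintro (i | i) (j | j)
    · have := orthonormal_iff_ite.mp bV.orthonormal i j
      simpa [e, Submodule.coe_inner, Sum.inl.injEq] using this
    · simp only [e, Sum.elim_inl, Sum.elim_inr]
      rw [if_neg (by simp)]
      exact Submodule.inner_right_of_mem_orthogonal (bV i).2 (bW j).2
    · simp only [e, Sum.elim_inl, Sum.elim_inr]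
      rw [if_neg (by simp)]
      exact Submodule.inner_left_of_mem_orthogonal (bV j).2 (bW i).2
    · have := orthonormal_iff_ite.mp bW.orthonormal i j
      simpa [e, Submodule.coe_inner, Sum.inr.injEq] using this
  have hcompl : IsCompl V Vᗮ := Submodule.isCompl_orthogonal_of_hasOrthogonalProjection
  let Bb : Module.Basis (Fin r ⊕ Fin (M - r)) ℝ (EuclideanSpace ℝ (Fin M)) :=
    (bV.toBasis.prod bW.toBasis).map (Submodule.prodEquivOfIsCompl V Vᗮ hcompl)
  have hBe : ⇑Bb = e := by
    funext k
    rcases k with i | i <;>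
      simp [Bb, e, Module.Basis.map_apply, Module.Basis.prod_apply]
  have horthB : Orthonormal ℝ ⇑Bb := hBe ▸ horth
  let B : OrthonormalBasis (Fin r ⊕ Fin (M - r)) ℝ (EuclideanSpace ℝ (Fin M)) :=
    Bb.toOrthonormalBasis horthB
  have hB : ∀ k, B k = e k := by
    intro k
    have : ⇑B = ⇑Bb := by
      rw [← Bb.coe_toOrthonormalBasis horthB]
    rw [this, hBe]
  let bb : Fin N → Fin r → ℝ := fun j i =>
    inner (𝕜 := ℝ) (a' j) ((bV i : EuclideanSpace ℝ (Fin M)))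
  let cc : Fin N → Fin (M - r) → ℝ := fun j i =>
    inner (𝕜 := ℝ) (a' j) ((bW i : EuclideanSpace ℝ (Fin M)))
  have hc0 : ∀ j ∈ S, ∀ i, cc j i = 0 := by
    intro j hj i
    have hmem : a' j ∈ V := Submodule.subset_span (Set.mem_image_of_mem a' hj)
    exact Submodule.inner_right_of_mem_orthogonal hmem (bW i).2
  -- the measure preserving change of variables
  let Φ : (Fin M → ℝ) → (Fin r → ℝ) × (Fin (M - r) → ℝ) := fun x =>
    (MeasurableEquiv.sumPiEquivProdPi (fun _ : Fin r ⊕ Fin (M - r) => ℝ))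
      ((MeasurableEquiv.toLp 2 (Fin r ⊕ Fin (M - r) → ℝ)).symm
        (B.repr ((MeasurableEquiv.toLp 2 (Fin M → ℝ)) x)))
  have hΦmp : MeasurePreserving Φ volume volume := by
    have m1 : MeasurePreserving (⇑(MeasurableEquiv.toLp 2 (Fin M → ℝ)))
        (volume : Measure (Fin M → ℝ)) (volume : Measure (EuclideanSpace ℝ (Fin M))) :=
      (EuclideanSpace.volume_preserving_symm_measurableEquiv_toLp (Fin M)).symm
    have m2 : MeasurePreserving (⇑B.repr) (volume : Measure (EuclideanSpace ℝ (Fin M)))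
        (volume : Measure (EuclideanSpace ℝ (Fin r ⊕ Fin (M - r)))) :=
      B.measurePreserving_repr
    have m3 : MeasurePreserving (⇑(MeasurableEquiv.toLp 2 (Fin r ⊕ Fin (M - r) → ℝ)).symm)
        (volume : Measure (EuclideanSpace ℝ (Fin r ⊕ Fin (M - r))))
        (volume : Measure (Fin r ⊕ Fin (M - r) → ℝ)) :=
      EuclideanSpace.volume_preserving_symm_measurableEquiv_toLp _
    have m4 : MeasurePreserving
        (⇑(MeasurableEquiv.sumPiEquivProdPi (fun _ : Fin r ⊕ Fin (M - r) => ℝ)))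
        (volume : Measure (Fin r ⊕ Fin (M - r) → ℝ)) volume :=
      (volume_measurePreserving_sumPiEquivProdPi_symm
        (fun _ : Fin r ⊕ Fin (M - r) => ℝ)).symm _
    exact ((m4.comp m3).comp m2).comp m1
  -- the key algebraic identity
  have hkey : ∀ j (x : Fin M → ℝ),
      ∑ m, a j m * x m = (∑ i, bb j i * (Φ x).1 i) + ∑ i, cc j i * (Φ x).2 i := by
    intro j x
    set x' : EuclideanSpace ℝ (Fin M) := (MeasurableEquiv.toLp 2 (Fin M → ℝ)) x
      with hx'
    have h1 : ∑ m, a j m * x m = inner (𝕜 := ℝ) (a' j) x' := by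
      simp [PiLp.inner_apply, RCLike.inner_apply, a', x']
      exact Finset.sum_congr rfl fun m _ => mul_comm _ _
    have h2 := B.sum_inner_mul_inner (a' j) x'
    have h3 : ∀ k, (inner (𝕜 := ℝ) (B k) x') = B.repr x' k := fun k =>
      (B.repr_apply_apply x' k).symm
    rw [h1, ← h2, Fintype.sum_sum_type]
    congr 1
    · refine Finset.sum_congr rfl fun i _ => ?_
      rw [h3, hB]
      rfl
    · refine Finset.sum_congr rfl fun i _ => ?_
      rw [h3, hB]
      rfl
  refine ⟨bb, cc, ?_⟩
  intro f hfm _ _ _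
  let g : (Fin r → ℝ) × (Fin (M - r) → ℝ) → ℝ≥0∞ := fun p =>
    (∏ j ∈ S, ENNReal.ofReal (f j (∑ m, bb j m * p.1 m))) *
      ∏ j ∈ Sᶜ, ENNReal.ofReal (f j ((∑ m, bb j m * p.1 m) + ∑ m, cc j m * p.2 m))
  have hgm : Measurable g := by
    apply Measurable.mul <;> refine Finset.measurable_prod _ fun j _ => ?_ <;>
      exact Measurable.ennreal_ofReal ((hfm j).comp (by fun_prop))
  have hΦg : ∀ x, (∏ j, ENNReal.ofReal (f j (∑ m, a j m * x m))) = g (Φ x) := by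
    intro x
    rw [← Finset.prod_mul_prod_compl S]
    congr 1
    · refine Finset.prod_congr rfl fun j hj => ?_
      rw [hkey j x]
      have : ∑ i, cc j i * (Φ x).2 i = 0 := by
        refine Finset.sum_eq_zero fun i _ => by rw [hc0 j hj i, zero_mul]
      rw [this, add_zero]
    · exact Finset.prod_congr rfl fun j _ => by rw [hkey j x]
  calc ∫⁻ x : Fin M → ℝ, ∏ j, ENNReal.ofReal (f j (∑ m, a j m * x m))
      = ∫⁻ x : Fin M → ℝ, g (Φ x) := by simp_rw [hΦg]
    _ = ∫⁻ p, g p := hΦmp.lintegral_comp hgm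
    _ = ∫⁻ y : Fin r → ℝ, ∫⁻ z : Fin (M - r) → ℝ, g (y, z) := by
        rw [Measure.volume_eq_prod, lintegral_prod _ hgm.aemeasurable]
    _ = _ := by
        refine lintegral_congr fun y => ?_
        simp only [g]
        refine lintegral_const_mul _ ?_
        exact Finset.measurable_prod _ fun j _ =>
          Measurable.ennreal_ofReal ((hfm j).comp (by fun_prop))
end

section
/- Vertex characterization: the polytope K_A = { z ∈ [0,1]^N : ∑_j z_j = M, ∑_{j∈S} z_j ≤ dim span{a_j : j∈S} ∀S } equals the convex hull of the 0-1 vectors z such that {a_j : z_j = 1} is a basis of ℝ^M. -/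
open Finset Module Submodule Set

namespace KAaux

variable {M N : ℕ} (a : Fin N → Fin M → ℝ)

noncomputable def rk (S : Finset (Fin N)) : ℕ :=
  Module.finrank ℝ (Submodule.span ℝ (a '' ↑S))

def KA : Set (Fin N → ℝ) :=
  {z : Fin N → ℝ | (∀ j, z j ∈ Set.Icc (0 : ℝ) 1) ∧ (∑ j, z j) = (M : ℝ) ∧
    ∀ S : Finset (Fin N), (∑ j ∈ S, z j) ≤ (rk a S : ℝ)}

def Ind : Set (Fin N → ℝ) :=
  {z : Fin N → ℝ | ∃ s : Finset (Fin N),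
    (∀ j, z j = if j ∈ s then 1 else 0) ∧
    LinearIndependent ℝ (fun j : s => a j) ∧
    Submodule.span ℝ (a '' ↑s) = ⊤}

lemma rk_le (S : Finset (Fin N)) : rk a S ≤ M := by
  have := Submodule.finrank_le (Submodule.span ℝ (a '' ↑S))
  simpa [rk, Module.finrank_fin_fun] using this

lemma rk_submodular (S T : Finset (Fin N)) :
    rk a (S ∪ T) + rk a (S ∩ T) ≤ rk a S + rk a T := by
  classical
  set U := Submodule.span ℝ (a '' ↑S)
  set V := Submodule.span ℝ (a '' ↑T)
  have hUV : Submodule.span ℝ (a '' ↑(S ∪ T)) = U ⊔ V := by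
    rw [Finset.coe_union, Set.image_union, Submodule.span_union]
  have hI : Submodule.span ℝ (a '' ↑(S ∩ T)) ≤ U ⊓ V := by
    apply Submodule.span_le.2
    rintro x ⟨j, hj, rfl⟩
    rw [Finset.mem_coe, Finset.mem_inter] at hj
    exact ⟨Submodule.subset_span ⟨j, hj.1, rfl⟩, Submodule.subset_span ⟨j, hj.2, rfl⟩⟩
  have h1 := Submodule.finrank_sup_add_finrank_inf_eq U V
  have hmono := Submodule.finrank_mono hI
  have h2 : rk a (S ∪ T) = finrank ℝ ↥(U ⊔ V) := by rw [rk, hUV]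
  have h3 : rk a (S ∩ T) ≤ finrank ℝ ↥(U ⊓ V) := hmono
  have h4 : rk a S = finrank ℝ ↥U := rfl
  have h5 : rk a T = finrank ℝ ↥V := rfl
  omega

lemma rk_univ (hspan : Submodule.span ℝ (Set.range a) = ⊤) :
    rk a Finset.univ = M := by
  rw [rk]
  rw [show ((Finset.univ : Finset (Fin N)) : Set (Fin N)) = Set.univ from Finset.coe_univ]
  rw [Set.image_univ, hspan]
  rw [finrank_top, Module.finrank_fin_fun]


lemma convex_KA : Convex ℝ (KA a) := by
  rintro x ⟨hx1, hx2, hx3⟩ y ⟨hy1, hy2, hy3⟩ p q hp hq hpq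
  refine ⟨fun j => ?_, ?_, fun S => ?_⟩
  · have h1 := (hx1 j).1; have h2 := (hx1 j).2
    have h3 := (hy1 j).1; have h4 := (hy1 j).2
    constructor
    · simp only [Pi.add_apply, Pi.smul_apply, smul_eq_mul]
      nlinarith
    · simp only [Pi.add_apply, Pi.smul_apply, smul_eq_mul]
      nlinarith
  · simp only [Pi.add_apply, Pi.smul_apply, smul_eq_mul]
    rw [Finset.sum_add_distrib, ← Finset.mul_sum, ← Finset.mul_sum, hx2, hy2]
    ring_nf
    nlinarith [hpq]
  · simp only [Pi.add_apply, Pi.smul_apply, smul_eq_mul]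
    rw [Finset.sum_add_distrib, ← Finset.mul_sum, ← Finset.mul_sum]
    have := hx3 S; have := hy3 S
    nlinarith [hx3 S, hy3 S]

lemma isCompact_KA : IsCompact (KA a) := by
  have hsub : KA a ⊆ Set.pi Set.univ (fun _ : Fin N => Set.Icc (0:ℝ) 1) := by
    rintro z ⟨h1, -, -⟩ j _
    exact h1 j
  have hcomp : IsCompact (Set.pi Set.univ (fun _ : Fin N => Set.Icc (0:ℝ) 1)) :=
    isCompact_univ_pi fun _ => isCompact_Icc
  refine hcomp.of_isClosed_subset ?_ hsub
  have h1 : IsClosed {z : Fin N → ℝ | ∀ j, z j ∈ Set.Icc (0:ℝ) 1} := by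
    rw [Set.setOf_forall]
    exact isClosed_iInter fun j => IsClosed.preimage (continuous_apply j) isClosed_Icc
  have h2 : IsClosed {z : Fin N → ℝ | (∑ j, z j) = (M : ℝ)} :=
    isClosed_eq (by continuity) continuous_const
  have h3 : IsClosed {z : Fin N → ℝ | ∀ S : Finset (Fin N),
      (∑ j ∈ S, z j) ≤ (rk a S : ℝ)} := by
    rw [Set.setOf_forall]
    exact isClosed_iInter fun S => isClosed_le (by continuity) continuous_const
  have : KA a = {z : Fin N → ℝ | ∀ j, z j ∈ Set.Icc (0:ℝ) 1} ∩
      ({z | (∑ j, z j) = (M : ℝ)} ∩ {z | ∀ S : Finset (Fin N),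
        (∑ j ∈ S, z j) ≤ (rk a S : ℝ)}) := by
    ext z; simp [KA, Set.mem_inter_iff, Set.mem_setOf_eq, and_assoc]
  rw [this]
  exact h1.inter (h2.inter h3)


lemma finite_Ind : (Ind a).Finite := by
  classical
  apply Set.Finite.subset (Set.finite_range
    (fun s : Finset (Fin N) => (fun j => if j ∈ s then (1:ℝ) else 0)))
  rintro z ⟨s, hz, -, -⟩
  exact ⟨s, by ext j; exact (hz j).symm⟩

lemma range_restrict (s : Finset (Fin N)) :
    Set.range (fun j : s => a j) = a '' ↑s := by
  ext x; constructor
  · rintro ⟨⟨j, hj⟩, rfl⟩; exact ⟨j, hj, rfl⟩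
  · rintro ⟨j, hj, rfl⟩; exact ⟨⟨j, hj⟩, rfl⟩

lemma Ind_subset_KA : Ind a ⊆ KA a := by
  classical
  rintro z ⟨s, hz, hli, hsp⟩
  -- basis cardinality
  have hb : Nonempty (Basis s ℝ (Fin M → ℝ)) := by
    refine ⟨Basis.mk hli ?_⟩
    rw [range_restrict a s, hsp]
  obtain ⟨b⟩ := hb
  have hcard : s.card = M := by
    have := Module.finrank_eq_card_basis b
    rw [Module.finrank_fin_fun, Fintype.card_coe] at this
    omega
  have hsum : ∀ S : Finset (Fin N), (∑ j ∈ S, z j) = ((S ∩ s).card : ℝ) := by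
    intro S
    rw [Finset.card_eq_sum_ones, Nat.cast_sum]
    rw [← Finset.sum_inter_add_sum_sdiff S s (fun j => z j)]
    have h1 : ∑ j ∈ S ∩ s, z j = ∑ _j ∈ S ∩ s, ((1:ℕ):ℝ) := by
      apply Finset.sum_congr rfl
      intro j hj
      rw [hz j, if_pos (Finset.mem_inter.1 hj).2]; simp
    have h2 : ∑ j ∈ S \ s, z j = 0 := by
      apply Finset.sum_eq_zero
      intro j hj
      rw [hz j, if_neg (Finset.mem_sdiff.1 hj).2]
    rw [h1, h2, add_zero]
  refine ⟨fun j => ?_, ?_, fun S => ?_⟩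
  · rw [hz j]; split <;> norm_num
  · rw [hsum Finset.univ, Finset.univ_inter, hcard]
  · rw [hsum S]
    -- card (S ∩ s) ≤ rk S since the vectors indexed by S ∩ s are lin. indep. in span (a '' S)
    have hinj : Function.Injective (fun j : (S ∩ s : Finset (Fin N)) =>
        (⟨j.1, (Finset.mem_inter.1 j.2).2⟩ : s)) := by
      rintro ⟨j, hj⟩ ⟨k, hk⟩ h
      simpa [Subtype.ext_iff] using h
    have hli2 : LinearIndependent ℝ (fun j : (S ∩ s : Finset (Fin N)) => a j) :=
      hli.comp _ hinj
    have hmem : ∀ j : (S ∩ s : Finset (Fin N)),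
        a j ∈ Submodule.span ℝ (a '' ↑S) :=
      fun j => Submodule.subset_span ⟨j.1, (Finset.mem_inter.1 j.2).1, rfl⟩
    have hli3 : LinearIndependent ℝ
        (fun j : (S ∩ s : Finset (Fin N)) =>
          (⟨a j, hmem j⟩ : Submodule.span ℝ (a '' ↑S))) := by
      apply ((Submodule.span ℝ (a '' ↑S)).subtype.linearIndependent_iff
        (Submodule.ker_subtype _)).1
      exact hli2
    have := hli3.fintype_card_le_finrank
    rw [Fintype.card_coe] at this
    exact_mod_cast this

lemma zero_one_mem_Ind (_hspan : Submodule.span ℝ (Set.range a) = ⊤)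
    {z : Fin N → ℝ} (hz : z ∈ KA a) (h01 : ∀ j, z j = 0 ∨ z j = 1) :
    z ∈ Ind a := by
  classical
  obtain ⟨hbox, hsum, hcon⟩ := hz
  set s : Finset (Fin N) := Finset.univ.filter (fun j => z j = 1) with hs
  have hzs : ∀ j, z j = if j ∈ s then 1 else 0 := by
    intro j
    by_cases h : j ∈ s
    · rw [if_pos h]; exact (Finset.mem_filter.1 h).2
    · rw [if_neg h]
      rcases h01 j with h0 | h1
      · exact h0
      · exact absurd (Finset.mem_filter.2 ⟨Finset.mem_univ j, h1⟩) h
  have e1 : ∑ j ∈ s, z j = ∑ j, z j :=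
    Finset.sum_subset (Finset.subset_univ s) (fun j _ hj => by rw [hzs j, if_neg hj])
  have e2 : ∑ j ∈ s, z j = (s.card : ℝ) := by
    rw [Finset.card_eq_sum_ones, Nat.cast_sum]
    apply Finset.sum_congr rfl
    intro j hj; rw [hzs j, if_pos hj]; simp
  have hcard : (s.card : ℝ) = M := by rw [← e2, e1, hsum]
  have hcardN : s.card = M := by exact_mod_cast hcard
  -- rk s = M
  have h1 : (M : ℝ) ≤ (rk a s : ℝ) := by
    have := hcon s
    rw [← hcard]
    calc (s.card : ℝ) = ∑ j ∈ s, z j := by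
          rw [Finset.card_eq_sum_ones, Nat.cast_sum]
          apply Finset.sum_congr rfl
          intro j hj; rw [hzs j, if_pos hj]; simp
      _ ≤ _ := hcon s
  have h2 : rk a s ≤ M := by
    have := Submodule.finrank_le (Submodule.span ℝ (a '' (↑s : Set (Fin N))))
    simpa [rk, Module.finrank_fin_fun] using this
  have hrk : rk a s = M := le_antisymm h2 (by exact_mod_cast h1)
  have htop : Submodule.span ℝ (a '' ↑s) = ⊤ := by
    apply Submodule.eq_top_of_finrank_eq
    rw [show Module.finrank ℝ (Submodule.span ℝ (a '' ↑s)) = rk a s from rfl, hrk,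
      Module.finrank_fin_fun]
  refine ⟨s, hzs, ?_, htop⟩
  apply linearIndependent_of_top_le_span_of_card_eq_finrank
  · rw [range_restrict a s, htop]
  · rw [Fintype.card_coe, hcardN, Module.finrank_fin_fun]


lemma mem_inf_of_forall {α : Type*} [DecidableEq α] [Fintype α]
    (F : Finset (Finset α)) (x : α) (h : ∀ S ∈ F, x ∈ S) : x ∈ F.inf id := by
  induction F using Finset.induction_on with
  | empty => simp [Finset.top_eq_univ]
  | @insert S F hS ih =>
    rw [Finset.inf_insert]
    rw [id]
    have h1 : x ∈ S := h S (Finset.mem_insert_self S F)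
    have h2 : x ∈ F.inf id := ih fun T hT => h T (Finset.mem_insert_of_mem hT)
    exact Finset.mem_inter.2 ⟨h1, h2⟩

lemma sum_zero_one_nat (z : Fin N → ℝ) (F : Finset (Fin N))
    (h : ∀ i ∈ F, z i = 0 ∨ z i = 1) : ∃ n : ℕ, ∑ i ∈ F, z i = n := by
  classical
  induction F using Finset.induction_on with
  | empty => exact ⟨0, by simp⟩
  | @insert i F hi ih =>
    obtain ⟨n, hn⟩ := ih fun t ht => h t (Finset.mem_insert_of_mem ht)
    rcases h i (Finset.mem_insert_self i F) with h0 | h1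
    · exact ⟨n, by rw [Finset.sum_insert hi, h0, hn, zero_add]⟩
    · exact ⟨n + 1, by rw [Finset.sum_insert hi, h1, hn]; push_cast; ring⟩

lemma extreme_zero_one (hspan : Submodule.span ℝ (Set.range a) = ⊤)
    {z : Fin N → ℝ} (hz : z ∈ (KA a).extremePoints ℝ) :
    ∀ j, z j = 0 ∨ z j = 1 := by
  classical
  obtain ⟨hzK, hext⟩ := hz
  obtain ⟨hbox, hsumz, hcon⟩ := hzK
  by_contra hfrac
  push_neg at hfrac
  obtain ⟨j0, hj00, hj01⟩ := hfrac
  -- the set of fractional coordinates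
  set Frac : Finset (Fin N) := Finset.univ.filter (fun i => z i ≠ 0 ∧ z i ≠ 1) with hFrac
  have hj0F : j0 ∈ Frac := Finset.mem_filter.2 ⟨Finset.mem_univ _, hj00, hj01⟩
  have hfrac_lt : ∀ i ∈ Frac, 0 < z i ∧ z i < 1 := by
    intro i hi
    obtain ⟨-, h0, h1⟩ := Finset.mem_filter.1 hi
    exact ⟨lt_of_le_of_ne (hbox i).1 (Ne.symm h0), lt_of_le_of_ne (hbox i).2 h1⟩
  -- tight sets
  set Tight : Finset (Fin N) → Prop := fun S => ∑ i ∈ S, z i = (rk a S : ℝ) with hTight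
  have htU : Tight Finset.univ := by
    rw [hTight]; simp only []; rw [hsumz, rk_univ a hspan]
  have huncross : ∀ S T, Tight S → Tight T → Tight (S ∩ T) ∧ Tight (S ∪ T) := by
    intro S T hS hT
    have e : ∑ i ∈ S ∪ T, z i + ∑ i ∈ S ∩ T, z i = ∑ i ∈ S, z i + ∑ i ∈ T, z i :=
      Finset.sum_union_inter
    have h1 := hcon (S ∪ T)
    have h2 := hcon (S ∩ T)
    have h3 : (rk a (S ∪ T) : ℝ) + (rk a (S ∩ T) : ℝ) ≤ (rk a S : ℝ) + (rk a T : ℝ) := by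
      exact_mod_cast rk_submodular a S T
    rw [hTight] at hS hT ⊢
    simp only [] at hS hT ⊢
    constructor <;> linarith
  -- minimal tight set containing a given index
  set Tmin : Fin N → Finset (Fin N) := fun i =>
    ((Finset.univ : Finset (Finset (Fin N))).filter (fun S => Tight S ∧ i ∈ S)).inf id
    with hTmin
  have hTmin_mem : ∀ i, i ∈ Tmin i := by
    intro i
    apply mem_inf_of_forall
    intro S hS
    exact (Finset.mem_filter.1 hS).2.2
  have hTmin_subset : ∀ i S, Tight S → i ∈ S → Tmin i ⊆ S := by
    intro i S hS hiS
    have : S ∈ (Finset.univ : Finset (Finset (Fin N))).filter (fun S => Tight S ∧ i ∈ S) :=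
      Finset.mem_filter.2 ⟨Finset.mem_univ _, hS, hiS⟩
    have h3 : Tmin i ≤ id S := Finset.inf_le this
    exact h3
  have htight_inf : ∀ F : Finset (Finset (Fin N)), (∀ S ∈ F, Tight S) → Tight (F.inf id) := by
    intro F
    induction F using Finset.induction_on with
    | empty => intro _; simpa [Finset.top_eq_univ] using htU
    | @insert S F hS ih =>
      intro h
      rw [Finset.inf_insert, id]
      exact (huncross S (F.inf id) (h S (Finset.mem_insert_self S F))
        (ih fun T hT => h T (Finset.mem_insert_of_mem hT))).1
  have hTmin_tight : ∀ i, Tight (Tmin i) := by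
    intro i
    apply htight_inf
    intro S hS
    exact (Finset.mem_filter.1 hS).2.1
  -- pick j fractional with |Tmin j| minimal
  obtain ⟨j, hjF, hjmin⟩ := Finset.exists_min_image Frac (fun i => (Tmin i).card) ⟨j0, hj0F⟩
  -- find another fractional index in Tmin j
  have hk : ∃ k ∈ Tmin j, k ≠ j ∧ k ∈ Frac := by
    by_contra hnk
    push_neg at hnk
    have h01 : ∀ i ∈ (Tmin j).erase j, z i = 0 ∨ z i = 1 := by
      intro i hi
      obtain ⟨hne, hiT⟩ := Finset.mem_erase.1 hi
      by_contra hcon'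
      push_neg at hcon'
      exact (hnk i hiT hne) (Finset.mem_filter.2 ⟨Finset.mem_univ _, hcon'.1, hcon'.2⟩)
    obtain ⟨n, hn⟩ := sum_zero_one_nat z ((Tmin j).erase j) h01
    have hsplit : ∑ i ∈ (Tmin j).erase j, z i + z j = ∑ i ∈ Tmin j, z i :=
      Finset.sum_erase_add _ _ (hTmin_mem j)
    have htj := hTmin_tight j
    simp only [hTight] at htj
    have hzj : z j = (rk a (Tmin j) : ℝ) - n := by
      rw [← htj, ← hsplit, hn]; ring
    obtain ⟨h0, h1⟩ := hfrac_lt j hjF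
    rw [hzj] at h0 h1
    have hlt1 : (n : ℝ) < (rk a (Tmin j) : ℝ) := by linarith
    have hlt2 : (rk a (Tmin j) : ℝ) < (n : ℝ) + 1 := by linarith
    have : n < rk a (Tmin j) := by exact_mod_cast hlt1
    have : rk a (Tmin j) < n + 1 := by exact_mod_cast hlt2
    omega
  obtain ⟨k, hkT, hkj, hkF⟩ := hk
  -- Tmin k = Tmin j
  have hTk : Tmin k = Tmin j := by
    have hsub : Tmin k ⊆ Tmin j := hTmin_subset k (Tmin j) (hTmin_tight j) hkT
    exact Finset.eq_of_subset_of_card_le hsub (hjmin k hkF)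
  -- every tight set contains j iff it contains k
  have hiff : ∀ S, Tight S → (j ∈ S ↔ k ∈ S) := by
    intro S hS
    constructor
    · intro hjS; exact hTmin_subset j S hS hjS hkT
    · intro hkS
      have := hTmin_subset k S hS hkS
      rw [hTk] at this
      exact this (hTmin_mem j)
  -- slack and epsilon
  set slack : Finset (Fin N) → ℝ := fun S =>
    if Tight S then 1 else (rk a S : ℝ) - ∑ i ∈ S, z i with hslack
  have hslack_pos : ∀ S, 0 < slack S := by
    intro S
    rw [hslack]; simp only []
    split
    · norm_num
    · next h =>
      have := hcon S
      rw [hTight] at h; simp only [] at h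
      have : ∑ i ∈ S, z i < (rk a S : ℝ) := lt_of_le_of_ne (hcon S) h
      linarith
  have hne : ((Finset.univ : Finset (Finset (Fin N)))).Nonempty := ⟨∅, Finset.mem_univ _⟩
  set ε1 : ℝ := Finset.univ.inf' hne slack with hε1def
  have hε1pos : 0 < ε1 := by
    rw [hε1def, Finset.lt_inf'_iff]
    intro S _
    exact hslack_pos S
  obtain ⟨hzj0, hzj1⟩ := hfrac_lt j hjF
  obtain ⟨hzk0, hzk1⟩ := hfrac_lt k hkF
  set ε : ℝ := min ε1 (min (z j) (min (1 - z j) (min (z k) (1 - z k)))) with hεdef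
  have hεpos : 0 < ε := by
    rw [hεdef]
    apply lt_min hε1pos
    apply lt_min hzj0
    apply lt_min (by linarith)
    exact lt_min hzk0 (by linarith)
  have hεslack : ∀ S, ε ≤ slack S := fun S =>
    le_trans (min_le_left _ _) (Finset.inf'_le slack (Finset.mem_univ S))
  have hεzj : ε ≤ z j := le_trans (min_le_right _ _) (min_le_left _ _)
  have hεzj1 : ε ≤ 1 - z j :=
    le_trans (min_le_right _ _) (le_trans (min_le_right _ _) (min_le_left _ _))
  have hεzk : ε ≤ z k :=
    le_trans (min_le_right _ _) (le_trans (min_le_right _ _)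
      (le_trans (min_le_right _ _) (min_le_left _ _)))
  have hεzk1 : ε ≤ 1 - z k :=
    le_trans (min_le_right _ _) (le_trans (min_le_right _ _)
      (le_trans (min_le_right _ _) (min_le_right _ _)))
  -- perturbed points
  set dir : Fin N → ℝ := fun i => (if i = j then 1 else 0) - (if i = k then 1 else 0)
    with hdir
  have hsumdir : ∀ S : Finset (Fin N),
      ∑ i ∈ S, dir i = (if j ∈ S then (1:ℝ) else 0) - (if k ∈ S then (1:ℝ) else 0) := by
    intro S
    rw [hdir]
    simp only []
    rw [Finset.sum_sub_distrib]
    rw [Finset.sum_ite_eq' S j (fun _ => (1:ℝ)), Finset.sum_ite_eq' S k (fun _ => (1:ℝ))]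
  have key : ∀ t : ℝ, -ε ≤ t → t ≤ ε → (fun i => z i + t * dir i) ∈ KA a := by
    intro t ht1 ht2
    refine ⟨fun i => ?_, ?_, fun S => ?_⟩
    · rw [hdir]; simp only []
      by_cases hij : i = j
      · subst hij
        rw [if_pos rfl, if_neg hkj.symm]  -- i = j ≠ k
        constructor <;> [nlinarith; nlinarith]
      · by_cases hik : i = k
        · subst hik
          rw [if_neg hij, if_pos rfl]
          constructor <;> [nlinarith; nlinarith]
        · rw [if_neg hij, if_neg hik]
          simpa using hbox i
    · rw [Finset.sum_add_distrib, ← Finset.mul_sum, hsumdir Finset.univ]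
      rw [if_pos (Finset.mem_univ j), if_pos (Finset.mem_univ k)]
      rw [hsumz]; ring
    · rw [Finset.sum_add_distrib, ← Finset.mul_sum, hsumdir S]
      by_cases hS : Tight S
      · have := (hiff S hS)
        by_cases hjS : j ∈ S
        · rw [if_pos hjS, if_pos (this.1 hjS)]
          have h'' := hS
          simp only [hTight] at h''
          rw [h'']; ring_nf; simp
        · rw [if_neg hjS, if_neg (fun h => hjS (this.2 h))]
          have h' := hS
          simp only [hTight] at h'
          rw [h']; ring_nf; simp
      · have hsl := hεslack S
        rw [hslack] at hsl; simp only [if_neg hS] at hsl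
        have hcorr : t * ((if j ∈ S then (1:ℝ) else 0) - (if k ∈ S then (1:ℝ) else 0)) ≤ ε := by
          split <;> split <;> simp <;> nlinarith
        linarith
  have hw1 : (fun i => z i + ε * dir i) ∈ KA a := key ε (by linarith) le_rfl
  have hw2 : (fun i => z i + (-ε) * dir i) ∈ KA a := key (-ε) le_rfl (by linarith)
  have hmid : z ∈ openSegment ℝ (fun i => z i + ε * dir i) (fun i => z i + (-ε) * dir i) := by
    refine ⟨1/2, 1/2, by norm_num, by norm_num, by norm_num, ?_⟩
    funext i
    simp only [Pi.add_apply, Pi.smul_apply, smul_eq_mul]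
    ring
  have heq := hext hw1 hw2 hmid
  have hj' : z j + ε * dir j = z j := congrFun heq j
  have hdj : dir j = 1 := by
    simp [hdir, Ne.symm hkj]
  rw [hdj] at hj'
  linarith


end KAaux

/-- vertex characterization: the polytope
`K_A = {z ∈ [0,1]^N : ∑ z_j = M, ∑_{j∈S} z_j ≤ dim span{a_j : j∈S} ∀S}` equals
the convex hull of the 0-1 vectors whose supports index bases of `ℝ^M`. -/
theorem KA_eq_convexHull_of_basis_indicators (M N : ℕ)
    (a : Fin N → Fin M → ℝ)
    (hspan : Submodule.span ℝ (Set.range a) = ⊤) :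
    {z : Fin N → ℝ | (∀ j, z j ∈ Set.Icc (0 : ℝ) 1) ∧ (∑ j, z j) = (M : ℝ) ∧
        ∀ S : Finset (Fin N), (∑ j ∈ S, z j) ≤
          (Module.finrank ℝ (Submodule.span ℝ (a '' ↑S)) : ℝ)} =
      convexHull ℝ
        {z : Fin N → ℝ | ∃ s : Finset (Fin N),
          (∀ j, z j = if j ∈ s then 1 else 0) ∧
          LinearIndependent ℝ (fun j : s => a j) ∧
          Submodule.span ℝ (a '' ↑s) = ⊤} := by
  show KAaux.KA a = convexHull ℝ (KAaux.Ind a)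
  apply Set.Subset.antisymm
  · have h1 := closure_convexHull_extremePoints (KAaux.isCompact_KA a) (KAaux.convex_KA a)
    have h2 : (KAaux.KA a).extremePoints ℝ ⊆ KAaux.Ind a := fun z hz =>
      KAaux.zero_one_mem_Ind a hspan hz.1 (KAaux.extreme_zero_one a hspan hz)
    calc KAaux.KA a = closure (convexHull ℝ ((KAaux.KA a).extremePoints ℝ)) := h1.symm
      _ ⊆ closure (convexHull ℝ (KAaux.Ind a)) := closure_mono (convexHull_mono h2)
      _ = convexHull ℝ (KAaux.Ind a) := ((KAaux.finite_Ind a).isClosed_convexHull ℝ).closure_eq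
  · exact convexHull_min (KAaux.Ind_subset_KA a) (KAaux.convex_KA a)
end
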